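/- For positive integers n and k with 1 ≤ k ≤ ⌊n/2⌋, the quantity 2^(-n) · Σ_{i=0}^{k-1} C(n,i) is strictly less than C(n,k) · √(n / 2^(2n+1)). -/

import Mathlib

open Finset

lemma cb_sq (m : ℕ) (hm : 1 ≤ m) : 16 ^ m ≤ 4 * m * (Nat.centralBinom m) ^ 2 := by
  induction m with
  | zero => omega
  | succ m ih =>
    rcases Nat.eq_or_lt_of_le hm with h | h
    · simp [← h]; decide
    · have hm1 : 1 ≤ m := by omega
      have ih := ih hm1
      have key : (m + 1) * (Nat.centralBinom (m+1)) = 2 * (2 * m + 1) * Nat.centralBinom m :=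
        Nat.succ_mul_centralBinom_succ m
      have hmul : (m+1) * 16 ^ (m+1) ≤ (m+1) * (4 * (m+1) * (Nat.centralBinom (m+1))^2) := by
        have h2 : (m+1) * (4 * (m+1) * (Nat.centralBinom (m+1))^2)
            = 4 * ((m+1) * Nat.centralBinom (m+1))^2 := by ring
        rw [h2, key]
        calc (m+1) * 16^(m+1) = 16 * (m+1) * 16^m := by ring
          _ ≤ 16 * (m+1) * (4 * m * (Nat.centralBinom m)^2) := Nat.mul_le_mul_left _ ih
          _ ≤ 4 * (2 * (2*m+1) * Nat.centralBinom m)^2 := by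
              nlinarith [sq_nonneg (Nat.centralBinom m)]
      exact Nat.le_of_mul_le_mul_left hmul (by omega)

lemma cb_real (m : ℕ) (hm : 1 ≤ m) :
    (4:ℝ)^m ≤ 2 * Real.sqrt m * ((2*m).choose m : ℝ) := by
  have h := cb_sq m hm
  have hℝ : (16:ℝ)^m ≤ 4 * m * ((2*m).choose m : ℝ)^2 := by
    have := (Nat.cast_le (α := ℝ)).mpr h
    push_cast [Nat.centralBinom] at this
    convert this using 2
  have hb : (0:ℝ) ≤ 2 * Real.sqrt m * ((2*m).choose m : ℝ) := by positivity
  have ha : (0:ℝ) ≤ (4:ℝ)^m := by positivity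
  have hsq : ((4:ℝ)^m)^2 ≤ (2 * Real.sqrt m * ((2*m).choose m : ℝ))^2 := by
    have hs : Real.sqrt m ^ 2 = (m:ℝ) := Real.sq_sqrt (by positivity)
    calc ((4:ℝ)^m)^2 = (16:ℝ)^m := by rw [← pow_mul, pow_mul']; norm_num
      _ ≤ 4 * m * ((2*m).choose m : ℝ)^2 := hℝ
      _ = (2 * Real.sqrt m * ((2*m).choose m : ℝ))^2 := by rw [mul_pow, mul_pow, hs]; ring
  exact (pow_le_pow_iff_left₀ ha hb (by norm_num)).mp hsq

lemma cb_odd_real (m : ℕ) (hm : 1 ≤ m) :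
    (4:ℝ)^m ≤ Real.sqrt (m+1) * ((2*m+1).choose m : ℝ) := by
  have hsymm : (2*m+1).choose (m+1) = (2*m+1).choose m := by
    have : (2*m+1) - m = m + 1 := by omega
    rw [← this, Nat.choose_symm (by omega)]
  have hid : (2*m+1) * ((2*m).choose m) = ((2*m+1).choose m) * (m+1) := by
    have := Nat.add_one_mul_choose_eq (2*m) m
    simpa [Nat.succ_eq_add_one, hsymm] using this
  have hidℝ : ((2*m+1):ℝ) * ((2*m).choose m : ℝ) = ((2*m+1).choose m : ℝ) * ((m:ℝ)+1) := by
    exact_mod_cast congrArg (Nat.cast (R := ℝ)) hid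
  have h := cb_sq m hm
  have hℝ : (16:ℝ)^m ≤ 4 * m * ((2*m).choose m : ℝ)^2 := by
    have := (Nat.cast_le (α := ℝ)).mpr h
    push_cast [Nat.centralBinom] at this
    convert this using 2
  set b : ℝ := ((2*m).choose m : ℝ)
  set c : ℝ := ((2*m+1).choose m : ℝ)
  have hmain : (16:ℝ)^m ≤ c^2 * ((m:ℝ)+1) := by
    have hp : (0:ℝ) < ((m:ℝ)+1)^2 := by positivity
    have key : (16:ℝ)^m * ((m:ℝ)+1)^2 ≤ c^2 * ((m:ℝ)+1) * ((m:ℝ)+1)^2 := by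
      have e1 : c^2 * ((m:ℝ)+1) * ((m:ℝ)+1)^2 = (c * ((m:ℝ)+1))^2 * ((m:ℝ)+1) := by ring
      have e2 : (c * ((m:ℝ)+1))^2 = ((2*m+1 : ℝ))^2 * b^2 := by
        rw [← hidℝ]; ring
      rw [e1, e2]
      have hmr : (0:ℝ) ≤ (m:ℝ) := by positivity
      nlinarith [hℝ, sq_nonneg b, sq_nonneg ((m:ℝ)-1)]
    nlinarith [key, hp]
  have hb : (0:ℝ) ≤ Real.sqrt (m+1) * c := by positivity
  have ha : (0:ℝ) ≤ (4:ℝ)^m := by positivity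
  have hsq : ((4:ℝ)^m)^2 ≤ (Real.sqrt (m+1) * c)^2 := by
    have hs : Real.sqrt ((m:ℝ)+1) ^ 2 = (m:ℝ)+1 := Real.sq_sqrt (by positivity)
    calc ((4:ℝ)^m)^2 = (16:ℝ)^m := by rw [← pow_mul, pow_mul']; norm_num
      _ ≤ c^2 * ((m:ℝ)+1) := hmain
      _ = (Real.sqrt ((m:ℝ)+1) * c)^2 := by rw [mul_pow, hs]; ring
  have := (pow_le_pow_iff_left₀ ha hb (by norm_num)).mp hsq
  simpa using this

lemma even_sum (m : ℕ) :
    2 * (∑ i ∈ range m, (2*m).choose i) + (2*m).choose m = 4 ^ m := by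
  have h := Nat.sum_range_choose_halfway m
  have A : ∑ i ∈ range (m+1), (2*m+1).choose i
      = (∑ i ∈ range m, ((2*m).choose i + (2*m).choose (i+1))) + 1 := by
    rw [Finset.sum_range_succ']
    simp [Nat.choose_succ_succ]
  rw [Finset.sum_add_distrib] at A
  have B : (∑ i ∈ range m, (2*m).choose (i+1)) + (2*m).choose 0
      = ∑ i ∈ range (m+1), (2*m).choose i := (Finset.sum_range_succ' _ _).symm
  have C : ∑ i ∈ range (m+1), (2*m).choose i
      = ∑ i ∈ range m, (2*m).choose i + (2*m).choose m := Finset.sum_range_succ _ _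
  simp only [Nat.choose_zero_right] at B
  omega

lemma odd_sum (m : ℕ) :
    (∑ i ∈ range m, (2*m+1).choose i) + (2*m+1).choose m = 4 ^ m := by
  have h := Nat.sum_range_choose_halfway m
  rw [Finset.sum_range_succ] at h
  exact h

lemma choose_ratio (n i : ℕ) (hin : i + 1 ≤ n) :
    (n.choose (i+1) : ℝ) * ((i:ℝ)+1) = (n.choose i : ℝ) * ((n:ℝ) - i) := by
  have h := Nat.choose_succ_right_eq n i
  have hc := congrArg (Nat.cast (R := ℝ)) h
  push_cast [Nat.cast_sub (by omega : i ≤ n)] at hc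
  linarith

lemma termwise (n i a : ℕ) (hia : i ≤ a) (han : a + 1 ≤ n) :
    (n.choose i : ℝ) * n.choose (a+1) ≤ (n.choose (i+1) : ℝ) * n.choose a := by
  have h1 := choose_ratio n i (by omega)
  have h2 := choose_ratio n a han
  have hY : (0:ℝ) ≤ (n.choose (i+1) : ℝ) * n.choose a := by positivity
  have hpos : (0:ℝ) < ((n:ℝ) - i) * ((a:ℝ)+1) := by
    have h3 : (i:ℝ) < n := by exact_mod_cast (by omega : i < n)
    have : (0:ℝ) < (n:ℝ) - i := by linarith
    positivity
  have key : (n.choose i : ℝ) * n.choose (a+1) * (((n:ℝ) - i) * ((a:ℝ)+1))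
      = (n.choose (i+1) : ℝ) * n.choose a * (((i:ℝ)+1) * ((n:ℝ) - a)) := by
    linear_combination (-((n.choose (a+1) : ℝ) * ((a:ℝ)+1))) * h1
      + ((n.choose (i+1) : ℝ) * ((i:ℝ)+1)) * h2
  have hfac : ((i:ℝ)+1) * ((n:ℝ) - a) ≤ ((n:ℝ) - i) * ((a:ℝ)+1) := by
    have hia' : (i:ℝ) ≤ a := by exact_mod_cast hia
    have han' : (a:ℝ) + 1 ≤ n := by exact_mod_cast han
    nlinarith
  have hle : (n.choose i : ℝ) * n.choose (a+1) * (((n:ℝ) - i) * ((a:ℝ)+1))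
      ≤ (n.choose (i+1) : ℝ) * n.choose a * (((n:ℝ) - i) * ((a:ℝ)+1)) := by
    rw [key]
    exact mul_le_mul_of_nonneg_left hfac hY
  exact le_of_mul_le_mul_right hle hpos

lemma step_ineq (n a : ℕ) (h : a + 1 ≤ n) :
    (∑ i ∈ range a, (n.choose i:ℝ)) * n.choose (a+1)
      ≤ (∑ i ∈ range (a+1), (n.choose i:ℝ)) * n.choose a := by
  rw [Finset.sum_mul, Finset.sum_mul]
  calc ∑ i ∈ range a, (n.choose i:ℝ) * n.choose (a+1)
      ≤ ∑ i ∈ range a, (n.choose (i+1):ℝ) * n.choose a := by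
        apply Finset.sum_le_sum
        intro i hi
        exact termwise n i a (by have := Finset.mem_range.mp hi; omega) h
    _ ≤ ∑ i ∈ range (a+1), (n.choose i:ℝ) * n.choose a := by
        rw [Finset.sum_range_succ' (fun i => (n.choose i:ℝ) * n.choose a)]
        have : (0:ℝ) ≤ (n.choose 0:ℝ) * n.choose a := by positivity
        linarith

lemma mono_ineq (n k : ℕ) : ∀ a, k ≤ a → a ≤ n / 2 →
    (∑ i ∈ range k, (n.choose i:ℝ)) * n.choose a
      ≤ (∑ i ∈ range a, (n.choose i:ℝ)) * n.choose k := by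
  intro a
  induction a with
  | zero => intro h1 _; interval_cases k; simp
  | succ a ih =>
    intro h1 h2
    rcases Nat.eq_or_lt_of_le h1 with rfl | hlt
    · simp
    · have hk : k ≤ a := by omega
      have ha2 : a ≤ n / 2 := by omega
      have ih := ih hk ha2
      have han : a + 1 ≤ n := by omega
      have hstep := step_ineq n a han
      have hca : (0:ℝ) < n.choose a := by
        exact_mod_cast Nat.choose_pos (by omega : a ≤ n)
      have hck : (0:ℝ) ≤ n.choose k := by positivity
      have hca1 : (0:ℝ) ≤ n.choose (a+1) := by positivity
      have hchain : (∑ i ∈ range k, (n.choose i:ℝ)) * n.choose (a+1) * n.choose a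
          ≤ (∑ i ∈ range (a+1), (n.choose i:ℝ)) * n.choose k * n.choose a := by
        calc (∑ i ∈ range k, (n.choose i:ℝ)) * n.choose (a+1) * n.choose a
            = ((∑ i ∈ range k, (n.choose i:ℝ)) * n.choose a) * n.choose (a+1) := by ring
          _ ≤ ((∑ i ∈ range a, (n.choose i:ℝ)) * n.choose k) * n.choose (a+1) :=
              mul_le_mul_of_nonneg_right ih hca1
          _ = ((∑ i ∈ range a, (n.choose i:ℝ)) * n.choose (a+1)) * n.choose k := by ring
          _ ≤ ((∑ i ∈ range (a+1), (n.choose i:ℝ)) * n.choose a) * n.choose k :=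
              mul_le_mul_of_nonneg_right hstep hck
          _ = (∑ i ∈ range (a+1), (n.choose i:ℝ)) * n.choose k * n.choose a := by ring
      exact le_of_mul_le_mul_right hchain hca

lemma center (n : ℕ) (h1 : 1 ≤ n / 2) :
    (∑ i ∈ range (n/2), (n.choose i:ℝ)) < (n.choose (n/2):ℝ) * Real.sqrt ((n:ℝ)/2) := by
  rcases Nat.even_or_odd n with ⟨m, hm⟩ | ⟨m, hm⟩
  · subst hm
    have hm2 : (m + m) / 2 = m := by omega
    rw [hm2]
    have hm1 : 1 ≤ m := by omega
    have hsum := even_sum m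
    have hsumℝ : 2 * (∑ i ∈ range m, ((2*m).choose i:ℝ)) + ((2*m).choose m:ℝ) = 4^m := by
      exact_mod_cast congrArg (Nat.cast (R := ℝ)) hsum
    have hcb := cb_real m hm1
    have hcpos : (0:ℝ) < ((2*m).choose m : ℝ) := by
      exact_mod_cast Nat.choose_pos (by omega : m ≤ 2*m)
    have h2m : m + m = 2 * m := by omega
    rw [h2m]
    have hhalf : ((2*m : ℕ):ℝ)/2 = (m:ℝ) := by push_cast; ring
    rw [hhalf]
    nlinarith [hsumℝ, hcb, hcpos, Real.sqrt_nonneg (m:ℝ)]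
  · subst hm
    have hm2 : (2*m + 1) / 2 = m := by omega
    rw [hm2]
    have hm1 : 1 ≤ m := by omega
    have hsum := odd_sum m
    have hsumℝ : (∑ i ∈ range m, ((2*m+1).choose i:ℝ)) + ((2*m+1).choose m:ℝ) = 4^m := by
      exact_mod_cast congrArg (Nat.cast (R := ℝ)) hsum
    have hcpos : (0:ℝ) < ((2*m+1).choose m : ℝ) := by
      exact_mod_cast Nat.choose_pos (by omega : m ≤ 2*m+1)
    have hhalf : ((2*m + 1 : ℕ):ℝ)/2 = (m:ℝ) + 1/2 := by push_cast; ring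
    rw [hhalf]
    set s : ℝ := Real.sqrt ((m:ℝ) + 1/2) with hs
    have hs0 : 0 ≤ s := Real.sqrt_nonneg _
    have hs2 : s^2 = (m:ℝ) + 1/2 := Real.sq_sqrt (by positivity)
    have hlt : Real.sqrt ((m:ℝ)+1) < 1 + s := by
      have h1s : Real.sqrt ((m:ℝ)+1) ^ 2 = (m:ℝ)+1 := Real.sq_sqrt (by positivity)
      nlinarith [Real.sqrt_nonneg ((m:ℝ)+1), hs0, hs2, h1s]
    have key : (4:ℝ)^m < (1 + s) * ((2*m+1).choose m : ℝ) := by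
      calc (4:ℝ)^m ≤ Real.sqrt ((m:ℝ)+1) * ((2*m+1).choose m : ℝ) := by
            have := cb_odd_real m hm1; push_cast at this ⊢; linarith
        _ < (1 + s) * ((2*m+1).choose m : ℝ) := mul_lt_mul_of_pos_right hlt hcpos
    nlinarith [hsumℝ, key, hcpos]

theorem hamming_ball_mass_lt (n k : ℕ) (hk1 : 1 ≤ k) (hk2 : k ≤ n / 2) :
    ((2 : ℝ) ^ n)⁻¹ * ∑ i ∈ Finset.range k, (n.choose i : ℝ) <
      (n.choose k : ℝ) * Real.sqrt ((n : ℝ) / 2 ^ (2 * n + 1)) := by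
  have hK1 : 1 ≤ n / 2 := le_trans hk1 hk2
  have hcent := center n hK1
  have hmono := mono_ineq n k (n/2) hk2 le_rfl
  have hkn : k ≤ n := le_trans hk2 (Nat.div_le_self n 2)
  have hckpos : (0:ℝ) < n.choose k := by exact_mod_cast Nat.choose_pos hkn
  have hcKpos : (0:ℝ) < n.choose (n/2) := by
    exact_mod_cast Nat.choose_pos (Nat.div_le_self n 2)
  have main : (∑ i ∈ range k, (n.choose i:ℝ)) < (n.choose k:ℝ) * Real.sqrt ((n:ℝ)/2) := by
    have h2 : (∑ i ∈ range (n/2), (n.choose i:ℝ)) * n.choose k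
        < ((n.choose (n/2):ℝ) * Real.sqrt ((n:ℝ)/2)) * n.choose k :=
      mul_lt_mul_of_pos_right hcent hckpos
    have h3 : (∑ i ∈ range k, (n.choose i:ℝ)) * n.choose (n/2)
        < ((n.choose k:ℝ) * Real.sqrt ((n:ℝ)/2)) * n.choose (n/2) := by
      calc (∑ i ∈ range k, (n.choose i:ℝ)) * n.choose (n/2)
          ≤ (∑ i ∈ range (n/2), (n.choose i:ℝ)) * n.choose k := hmono
        _ < ((n.choose (n/2):ℝ) * Real.sqrt ((n:ℝ)/2)) * n.choose k := h2
        _ = ((n.choose k:ℝ) * Real.sqrt ((n:ℝ)/2)) * n.choose (n/2) := by ring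
    exact lt_of_mul_lt_mul_right h3 (le_of_lt hcKpos)
  have h2n : (0:ℝ) < (2:ℝ)^n := by positivity
  have hsplit : Real.sqrt ((n:ℝ)/2^(2*n+1)) = Real.sqrt ((n:ℝ)/2) / 2^n := by
    have hpow : (2:ℝ)^(2*n+1) = ((2:ℝ)^n)^2 * 2 := by
      rw [pow_succ, pow_mul']
    rw [show ((n:ℝ)/2^(2*n+1)) = ((n:ℝ)/2) / ((2:ℝ)^n)^2 by rw [hpow]; ring,
      Real.sqrt_div (by positivity), Real.sqrt_sq (by positivity)]
  rw [hsplit]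
  calc ((2 : ℝ) ^ n)⁻¹ * ∑ i ∈ Finset.range k, (n.choose i : ℝ)
      < ((2 : ℝ) ^ n)⁻¹ * ((n.choose k:ℝ) * Real.sqrt ((n:ℝ)/2)) :=
        mul_lt_mul_of_pos_left main (inv_pos.mpr h2n)
    _ = (n.choose k : ℝ) * (Real.sqrt ((n : ℝ) / 2) / 2 ^ n) := by ring
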